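/- A wall-crossing transformation is an algebra automorphism: let R be a commutative ring, B = R[x^{±1}, y^{±1}][[u]], let v = (v_1, v_2) ∈ ℤ² and n = (n_1, n_2) ∈ ℤ² with n_1v_1 + n_2v_2 = 0, let c ∈ R, and set f = 1 + u·c·x^{v_1}y^{v_2} (a unit in B). Then the unique R[[u]]-linear, (u)-adically continuous map θ_{f,n} : B → B with θ_{f,n}(x^p y^q) = f^{n_1p + n_2q} x^p y^q for all (p,q) ∈ ℤ² is an R[[u]]-algebra automorphism of B, whose inverse is θ_{f^{-1},n}. -/

import Mathlib

set_option synthInstance.maxHeartbeats 1000000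
set_option maxHeartbeats 1000000


/- STATEMENT 13: A wall-crossing transformation is an algebra automorphism.
Let R be a commutative ring, B = R[x^{±1},y^{±1}][[u]], v, n ∈ ℤ² with ⟨n,v⟩ = 0,
c ∈ R, f = 1 + u·c·x^{v₁}y^{v₂} (a unit in B). The unique R[[u]]-linear,
(u)-adically continuous map θ_{f,n} : B → B with θ_{f,n}(x^p y^q) = f^{n₁p+n₂q} x^p y^q
is an R[[u]]-algebra automorphism of B, with inverse θ_{f⁻¹,n}. -/

noncomputable section

/-- `R[x^{±1}, y^{±1}]`, the Laurent polynomial ring in two variables over `R`,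
realized as the monoid algebra of `ℤ²`. -/
abbrev Pwc (R : Type) [CommRing R] : Type := AddMonoidAlgebra R (ℤ × ℤ)

/-- `B = R[x^{±1}, y^{±1}][[u]]`. -/
abbrev Bwc (R : Type) [CommRing R] : Type := PowerSeries (Pwc R)

/-- The Laurent monomial `x^p y^q`, viewed as an element of `B`. -/
def zmon (R : Type) [CommRing R] (w : ℤ × ℤ) : Bwc R :=
  PowerSeries.C (R := Pwc R) (AddMonoidAlgebra.single w 1)

/-- The `(u)`-adic topology on `B`. -/
def adicTopBwc (R : Type) [CommRing R] : TopologicalSpace (Bwc R) :=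
  (Ideal.span {(PowerSeries.X : Bwc R)}).adicTopology

namespace WCaux

variable (R : Type) [CommRing R]

def Iwc : Ideal (Bwc R) := Ideal.span {PowerSeries.X}

variable {R}

lemma adicTop_eq : adicTopBwc R = (Iwc R).adicTopology := rfl

lemma mem_Iwc_pow {g : Bwc R} {m : ℕ} :
    g ∈ Iwc R ^ m ↔ ∀ j < m, PowerSeries.coeff (R := Pwc R) j g = 0 := by
  rw [Iwc, Ideal.span_singleton_pow, Ideal.mem_span_singleton, PowerSeries.X_pow_dvd_iff]

lemma zmon_mul (w w' : ℤ × ℤ) : zmon R w * zmon R w' = zmon R (w + w') := by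
  simp [zmon, ← map_mul, AddMonoidAlgebra.single_mul_single]

lemma zmon_zero : zmon R 0 = 1 := by
  simp [zmon, ← AddMonoidAlgebra.one_def]

lemma smul_eq (s : PowerSeries R) (b : Bwc R) :
    s • b = PowerSeries.map (algebraMap R (Pwc R)) s * b := by
  rw [Algebra.smul_def, PowerSeries.algebraMap_apply'']

lemma smul_C_zmon (c : R) (w : ℤ × ℤ) :
    (PowerSeries.C (R := R) c * PowerSeries.X) • zmon R w
      = PowerSeries.X * PowerSeries.C (R := Pwc R) (AddMonoidAlgebra.single w c) := by
  rw [smul_eq, zmon, map_mul, PowerSeries.map_C, PowerSeries.map_X]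
  rw [mul_comm ((PowerSeries.C (R := Pwc R)) _) PowerSeries.X, mul_assoc]
  congr 1
  rw [← map_mul, AddMonoidAlgebra.coe_algebraMap]
  simp [AddMonoidAlgebra.single_mul_single]


open PowerSeries Filter in
lemma filtration_of_continuous (φ : Bwc R →ₗ[PowerSeries R] Bwc R)
    (hc : @Continuous _ _ (adicTopBwc R) (adicTopBwc R) φ) (N : ℕ) :
    ∃ m : ℕ, ∀ g ∈ Iwc R ^ m, φ g ∈ Iwc R ^ N := by
  letI := adicTopBwc R
  have h0 := hc.tendsto 0
  rw [map_zero] at h0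
  replace h0 := (HasBasis.tendsto_iff ((Iwc R).hasBasis_nhds_zero_adic) ((Iwc R).hasBasis_nhds_zero_adic)).mp h0
  obtain ⟨m, -, hm⟩ := h0 N trivial
  exact ⟨m, fun g hg => hm g hg⟩

open Filter in
lemma continuous_of_filtration (φ : Bwc R →ₗ[PowerSeries R] Bwc R)
    (h : ∀ m : ℕ, ∀ g ∈ Iwc R ^ m, φ g ∈ Iwc R ^ m) :
    @Continuous _ _ (adicTopBwc R) (adicTopBwc R) φ := by
  letI := adicTopBwc R
  rw [continuous_iff_continuousAt]
  intro x
  rw [ContinuousAt]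
  refine (((Iwc R).hasBasis_nhds_adic x).tendsto_iff ((Iwc R).hasBasis_nhds_adic (φ x))).mpr ?_
  intro N _
  refine ⟨N, trivial, ?_⟩
  rintro y ⟨z, hz, rfl⟩
  exact ⟨φ z, h N z hz, (map_add φ x z).symm⟩

variable (R) in
def spanZmon : Submodule (PowerSeries R) (Bwc R) :=
  Submodule.span (PowerSeries R) (Set.range (zmon R))

lemma C_mem_spanZmon (p : Pwc R) : (PowerSeries.C (R := Pwc R) p : Bwc R) ∈ spanZmon R := by
  induction p using AddMonoidAlgebra.induction with
  | zero => simp only [map_zero]; exact zero_mem _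
  | single_add w b p hw hb ih =>
      rw [map_add]
      refine add_mem ?_ ih
      have : (PowerSeries.C (R := Pwc R)) (AddMonoidAlgebra.single w b)
          = ((PowerSeries.C (R := R) b : PowerSeries R)) • zmon R w := by
        rw [smul_eq, PowerSeries.map_C, zmon, ← map_mul, AddMonoidAlgebra.coe_algebraMap]
        simp [AddMonoidAlgebra.single_mul_single]
      rw [this]
      exact Submodule.smul_mem _ _ (Submodule.subset_span ⟨w, rfl⟩)

lemma approx (g : Bwc R) (m : ℕ) :
    ∃ t ∈ spanZmon R, g - t ∈ Iwc R ^ m := by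
  classical
  refine ⟨∑ k ∈ Finset.range m,
    ((PowerSeries.X : PowerSeries R) ^ k) •
      (PowerSeries.C (R := Pwc R) (PowerSeries.coeff (R := Pwc R) k g)), ?_, ?_⟩
  · exact Submodule.sum_mem _ fun k _ => Submodule.smul_mem _ _ (C_mem_spanZmon _)
  · rw [mem_Iwc_pow]
    intro j hj
    rw [map_sub, map_sum]
    have : ∀ k ∈ Finset.range m,
        PowerSeries.coeff (R := Pwc R) j
          (((PowerSeries.X : PowerSeries R) ^ k) •
            (PowerSeries.C (R := Pwc R) (PowerSeries.coeff (R := Pwc R) k g)))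
        = if j = k then PowerSeries.coeff (R := Pwc R) k g else 0 := by
      intro k _
      rw [smul_eq, map_pow, PowerSeries.map_X, mul_comm, PowerSeries.coeff_C_mul_X_pow]
    rw [Finset.sum_congr rfl this, Finset.sum_ite_eq (Finset.range m) j
      (fun k => PowerSeries.coeff (R := Pwc R) k g), if_pos (Finset.mem_range.mpr hj), sub_self]

lemma eq_of_zmon (θ θ' : Bwc R →ₗ[PowerSeries R] Bwc R)
    (hθc : @Continuous _ _ (adicTopBwc R) (adicTopBwc R) θ)
    (hθ'c : @Continuous _ _ (adicTopBwc R) (adicTopBwc R) θ')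
    (h : ∀ w : ℤ × ℤ, θ (zmon R w) = θ' (zmon R w)) : ∀ g, θ g = θ' g := by
  have hspan : ∀ t ∈ spanZmon R, θ t = θ' t := by
    intro t ht
    exact LinearMap.eqOn_span (fun x hx => by obtain ⟨w, rfl⟩ := hx; exact h w) ht
  intro g
  have key : ∀ N : ℕ, θ g - θ' g ∈ Iwc R ^ N := by
    intro N
    obtain ⟨m₁, hm₁⟩ := filtration_of_continuous θ hθc N
    obtain ⟨m₂, hm₂⟩ := filtration_of_continuous θ' hθ'c N
    obtain ⟨t, htsp, htr⟩ := approx g (max m₁ m₂)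
    have hr₁ : g - t ∈ Iwc R ^ m₁ :=
      Ideal.pow_le_pow_right (le_max_left m₁ m₂) htr
    have hr₂ : g - t ∈ Iwc R ^ m₂ :=
      Ideal.pow_le_pow_right (le_max_right m₁ m₂) htr
    have : θ g - θ' g = θ (g - t) - θ' (g - t) := by
      rw [map_sub, map_sub, hspan t htsp]; ring
    rw [this]
    exact sub_mem (hm₁ _ hr₁) (hm₂ _ hr₂)
  have hzero : θ g - θ' g = 0 := PowerSeries.ext fun j => by
    simpa using (mem_Iwc_pow.mp (key (j + 1))) j (Nat.lt_succ_self j)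
  exact sub_eq_zero.mp hzero
  
lemma cont_mulLeft (a : Bwc R) :
    @Continuous _ _ (adicTopBwc R) (adicTopBwc R) (LinearMap.mulLeft (PowerSeries R) a) :=
  continuous_of_filtration _ (fun m g hg => Ideal.mul_mem_left _ a hg)

lemma cont_comp {φ ψ : Bwc R →ₗ[PowerSeries R] Bwc R}
    (hφ : @Continuous _ _ (adicTopBwc R) (adicTopBwc R) φ)
    (hψ : @Continuous _ _ (adicTopBwc R) (adicTopBwc R) ψ) :
    @Continuous _ _ (adicTopBwc R) (adicTopBwc R) (φ ∘ₗ ψ) := by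
  letI := adicTopBwc R
  exact hφ.comp hψ


lemma theta_one (F : (Bwc R)ˣ) (n : ℤ × ℤ) (θ : Bwc R →ₗ[PowerSeries R] Bwc R)
    (hθ : ∀ w : ℤ × ℤ,
      θ (zmon R w) = ((F ^ (n.1 * w.1 + n.2 * w.2) : (Bwc R)ˣ) : Bwc R) * zmon R w) :
    θ 1 = 1 := by
  have h := hθ 0
  rw [zmon_zero] at h
  simpa using h

lemma theta_mul (F : (Bwc R)ˣ) (n : ℤ × ℤ) (θ : Bwc R →ₗ[PowerSeries R] Bwc R)
    (hc : @Continuous _ _ (adicTopBwc R) (adicTopBwc R) θ)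
    (hθ : ∀ w : ℤ × ℤ,
      θ (zmon R w) = ((F ^ (n.1 * w.1 + n.2 * w.2) : (Bwc R)ˣ) : Bwc R) * zmon R w) :
    ∀ g h : Bwc R, θ (g * h) = θ g * θ h := by
  have step1 : ∀ (w' : ℤ × ℤ) (g : Bwc R), θ (zmon R w' * g) = θ (zmon R w') * θ g := by
    intro w'
    have := eq_of_zmon (θ ∘ₗ LinearMap.mulLeft (PowerSeries R) (zmon R w'))
      ((LinearMap.mulLeft (PowerSeries R) (θ (zmon R w'))) ∘ₗ θ)
      (cont_comp hc (cont_mulLeft _))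
      (cont_comp (cont_mulLeft _) hc)
      (fun w => by
        simp only [LinearMap.comp_apply, LinearMap.mulLeft_apply]
        rw [zmon_mul, hθ, hθ, hθ, ← zmon_mul]
        have hexp : n.1 * (w' + w).1 + n.2 * (w' + w).2
            = (n.1 * w'.1 + n.2 * w'.2) + (n.1 * w.1 + n.2 * w.2) := by
          simp only [Prod.fst_add, Prod.snd_add]; ring
        rw [hexp, zpow_add, Units.val_mul]; ring)
    intro g
    simpa using this g
  intro g h
  have := eq_of_zmon (θ ∘ₗ LinearMap.mulLeft (PowerSeries R) g)
    ((LinearMap.mulLeft (PowerSeries R) (θ g)) ∘ₗ θ)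
    (cont_comp hc (cont_mulLeft _))
    (cont_comp (cont_mulLeft _) hc)
    (fun w' => by
      simp only [LinearMap.comp_apply, LinearMap.mulLeft_apply]
      rw [mul_comm g (zmon R w'), step1 w' g, mul_comm]) h
  simpa using this

end WCaux

open WCaux

/-- A wall-crossing transformation `θ_{f,n}` is an `R[[u]]`-algebra automorphism of
`B = R[x^{±1},y^{±1}][[u]]`, with inverse the wall-crossing transformation
`θ_{f⁻¹,n}`.  Here `f = 1 + u·c·x^{v₁}y^{v₂}` is a unit in `B`, `⟨n,v⟩ = 0`, and
`θ, θ'` are any `R[[u]]`-linear, `(u)`-adically continuous maps acting on Laurent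
monomials by `x^p y^q ↦ f^{±(n₁p+n₂q)} x^p y^q`. -/
theorem wall_crossing_is_algebra_automorphism (R : Type) [CommRing R]
    (v n : ℤ × ℤ) (hnv : n.1 * v.1 + n.2 * v.2 = 0) (c : R)
    (f : (Bwc R)ˣ)
    (hf : (f : Bwc R) = 1 + PowerSeries.X * PowerSeries.C (R := Pwc R) (AddMonoidAlgebra.single v c))
    (θ θ' : Bwc R →ₗ[PowerSeries R] Bwc R)
    (hθcont : @Continuous (Bwc R) (Bwc R) (adicTopBwc R) (adicTopBwc R) θ)
    (hθ'cont : @Continuous (Bwc R) (Bwc R) (adicTopBwc R) (adicTopBwc R) θ')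
    (hθ : ∀ w : ℤ × ℤ, θ (zmon R w) = ((f ^ (n.1 * w.1 + n.2 * w.2) : (Bwc R)ˣ) : Bwc R) * zmon R w)
    (hθ' : ∀ w : ℤ × ℤ,
      θ' (zmon R w) = ((f⁻¹ ^ (n.1 * w.1 + n.2 * w.2) : (Bwc R)ˣ) : Bwc R) * zmon R w) :
    θ 1 = 1 ∧ (∀ g h : Bwc R, θ (g * h) = θ g * θ h) ∧
      Function.LeftInverse θ' θ ∧ Function.RightInverse θ' θ := by
  have h1 : θ 1 = 1 := theta_one f n θ hθ
  have h1' : θ' 1 = 1 := theta_one f⁻¹ n θ' hθ'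
  have hm : ∀ g h : Bwc R, θ (g * h) = θ g * θ h := theta_mul f n θ hθcont hθ
  have hm' : ∀ g h : Bwc R, θ' (g * h) = θ' g * θ' h := theta_mul f⁻¹ n θ' hθ'cont hθ'
  have hzv : θ (zmon R v) = zmon R v := by rw [hθ v, hnv]; simp
  have hzv' : θ' (zmon R v) = zmon R v := by rw [hθ' v, hnv]; simp
  have hfeq : (f : Bwc R) = 1 + (PowerSeries.C (R := R) c * PowerSeries.X) • zmon R v := by
    rw [hf, smul_C_zmon]
  have hfixθ : θ ↑f = ↑f := by rw [hfeq, map_add, map_smul, h1, hzv]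
  have hfixθ' : θ' ↑f = ↑f := by rw [hfeq, map_add, map_smul, h1', hzv']
  let Θ : Bwc R →* Bwc R := { toFun := θ, map_one' := h1, map_mul' := fun a b => hm a b }
  let Θ' : Bwc R →* Bwc R := { toFun := θ', map_one' := h1', map_mul' := fun a b => hm' a b }
  have hU : Units.map Θ f = f := Units.ext hfixθ
  have hU' : Units.map Θ' f = f := Units.ext hfixθ'
  have hpowθ : ∀ k : ℤ, θ ↑(f ^ k) = ↑(f ^ k) := by
    intro k
    have : Units.map Θ (f ^ k) = f ^ k := by rw [map_zpow, hU]
    calc θ ↑(f ^ k) = ↑(Units.map Θ (f ^ k)) := rfl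
      _ = ↑(f ^ k) := by rw [this]
  have hpowθ' : ∀ k : ℤ, θ' ↑(f ^ k) = ↑(f ^ k) := by
    intro k
    have : Units.map Θ' (f ^ k) = f ^ k := by rw [map_zpow, hU']
    calc θ' ↑(f ^ k) = ↑(Units.map Θ' (f ^ k)) := rfl
      _ = ↑(f ^ k) := by rw [this]
  have hcid : @Continuous _ _ (adicTopBwc R) (adicTopBwc R)
      (LinearMap.id : Bwc R →ₗ[PowerSeries R] Bwc R) := by
    letI := adicTopBwc R; exact continuous_id
  have hli : ∀ g, θ' (θ g) = g := by
    have := eq_of_zmon (θ' ∘ₗ θ) LinearMap.id (cont_comp hθ'cont hθcont) hcid (fun w => by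
      simp only [LinearMap.comp_apply, LinearMap.id_apply]
      rw [hθ w, hm', hpowθ', hθ' w, ← mul_assoc, ← Units.val_mul]
      have hcan : f ^ (n.1 * w.1 + n.2 * w.2) * f⁻¹ ^ (n.1 * w.1 + n.2 * w.2) = 1 := by
        rw [inv_zpow, mul_inv_cancel]
      rw [hcan, Units.val_one, one_mul])
    intro g; simpa using this g
  have hri : ∀ g, θ (θ' g) = g := by
    have := eq_of_zmon (θ ∘ₗ θ') LinearMap.id (cont_comp hθcont hθ'cont) hcid (fun w => by
      simp only [LinearMap.comp_apply, LinearMap.id_apply]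
      have hinv : (f⁻¹ ^ (n.1 * w.1 + n.2 * w.2) : (Bwc R)ˣ)
          = f ^ (-(n.1 * w.1 + n.2 * w.2)) := by
        rw [inv_zpow']
      rw [hθ' w, hinv, hm, hpowθ, hθ w, ← mul_assoc, ← Units.val_mul]
      have hcan : f ^ (-(n.1 * w.1 + n.2 * w.2)) * f ^ (n.1 * w.1 + n.2 * w.2) = 1 := by
        rw [← zpow_add, neg_add_cancel, zpow_zero]
      rw [hcan, Units.val_one, one_mul])
    intro g; simpa using this g
  exact ⟨h1, hm, hli, hri⟩

end
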